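/- Let A ∈ ℝ^{n×n} and b ∈ ℝⁿ, b ≠ 0. Suppose: (i) 𝒰_d ∈ ℝ^{n×d} has orthonormal columns and ℋ_d := 𝒰_d^T A 𝒰_d; (ii) U_d ∈ ℝ^{n×d}, u_{d+1} ∈ ℝⁿ, H_d ∈ ℝ^{d×d}, h_{d+1,d} ∈ ℝ satisfy A U_d = U_d H_d + h_{d+1,d} u_{d+1} e_d^T; (iii) U_d = 𝒰_d 𝒯_d with 𝒯_d upper triangular and invertible, 𝒯_d e₁ = e₁, and τ̂_d the (d,d) entry of 𝒯_d. Set v := −(h_{d+1,d}/τ̂_d) 𝒰_d^T u_{d+1} and assume ℋ_d + v e_d^T (viewed over ℂ) is diagonalizable: ℋ_d + v e_d^T = X Λ X^{-1}, Λ = diag(λ₁,…,λ_d), with α_i = e_d^T X e_i, β_i = e_i^T X^{-1} e₁. Then for every polynomial p ∈ ℂ[X], the truncated FOM approximation f_d^tr := U_d p(H_d) e₁ ‖b‖ and the full FOM approximation f_d^fom := 𝒰_d p(ℋ_d) e₁ ‖b‖ satisfy f_d^tr − f_d^fom = 𝒰_d (Σ_{i=1}^d α_i β_i · p[ℋ_d,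 λ_i]) v · ‖b‖. -/

import Mathlib

open Matrix

/-- Euclidean norm of a vector in `ℝ^m`. -/
noncomputable def eunorm {m : ℕ} (v : Fin m → ℝ) : ℝ := Real.sqrt (∑ i, (v i) ^ 2)

/-- The first-order divided-difference polynomial `p[·, λ] = (p - p(λ)) / (X - λ)`
(exact division in `ℂ[X]`). -/
noncomputable def divDiffPoly (p : Polynomial ℂ) (lam : ℂ) : Polynomial ℂ :=
  (p - Polynomial.C (p.eval lam)) / (Polynomial.X - Polynomial.C lam)

lemma semiconj_pow {m : ℕ} (g a b : Matrix (Fin m) (Fin m) ℂ) (hc : g * a = b * g) :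
    ∀ k : ℕ, g * a ^ k = b ^ k * g := by
  intro k
  induction k with
  | zero => simp
  | succ k ih => rw [pow_succ, pow_succ, ← mul_assoc, ih, mul_assoc, hc, ← mul_assoc]

lemma semiconj_aeval {m : ℕ} (g a b : Matrix (Fin m) (Fin m) ℂ) (hc : g * a = b * g)
    (p : Polynomial ℂ) : g * (Polynomial.aeval a p) = (Polynomial.aeval b p) * g := by
  induction p using Polynomial.induction_on' with
  | add p q hp hq => rw [map_add, map_add, mul_add, add_mul, hp, hq]
  | monomial k c =>
      rw [Polynomial.aeval_monomial, Polynomial.aeval_monomial, ← mul_assoc,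
        ← Algebra.commutes, mul_assoc, semiconj_pow g a b hc k, ← mul_assoc]

lemma aeval_diagonal' {m : ℕ} (f : Fin m → ℂ) (p : Polynomial ℂ) :
    Polynomial.aeval (Matrix.diagonal f) p = Matrix.diagonal (fun i => p.eval (f i)) := by
  rw [show Matrix.diagonal f = Matrix.diagonalAlgHom (n := Fin m) ℂ f from rfl,
    Polynomial.aeval_algHom_apply]
  simp [Matrix.diagonalAlgHom_apply]

lemma sum_mulVec' {m k : ℕ} (M : Fin k → Matrix (Fin m) (Fin m) ℂ) (w : Fin m → ℂ) :
    (∑ i, M i) *ᵥ w = ∑ i, (M i) *ᵥ w := by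
  ext j
  simp only [Matrix.mulVec, dotProduct, Finset.sum_apply, Matrix.sum_apply, Finset.sum_mul]
  rw [Finset.sum_comm]

lemma map_ofReal_mul {k l m : ℕ} (P : Matrix (Fin k) (Fin l) ℝ) (Q : Matrix (Fin l) (Fin m) ℝ) :
    (P * Q).map Complex.ofReal = P.map Complex.ofReal * Q.map Complex.ofReal := by
  ext i j
  simp [Matrix.map_apply, Matrix.mul_apply]

lemma map_ofReal_add {k l : ℕ} (P Q : Matrix (Fin k) (Fin l) ℝ) :
    (P + Q).map Complex.ofReal = P.map Complex.ofReal + Q.map Complex.ofReal := by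
  ext i j
  simp [Matrix.map_apply]

theorem truncated_minus_full_fom
    {n d : ℕ}
    (A : Matrix (Fin n) (Fin n) ℝ) (b : Fin n → ℝ) (hb : b ≠ 0)
    (cU : Matrix (Fin n) (Fin (d + 1)) ℝ) (hcU : cUᵀ * cU = 1)
    (U : Matrix (Fin n) (Fin (d + 1)) ℝ) (u : Fin n → ℝ)
    (H : Matrix (Fin (d + 1)) (Fin (d + 1)) ℝ) (h : ℝ)
    (hrel : A * U = U * H + h • vecMulVec u (Pi.single (Fin.last d) 1 : Fin (d + 1) → ℝ))
    (cT : Matrix (Fin (d + 1)) (Fin (d + 1)) ℝ)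
    (hcTupper : ∀ i j : Fin (d + 1), j < i → cT i j = 0)
    (hcTdet : cT.det ≠ 0)
    (hcTe1 : cT.mulVec (Pi.single 0 1 : Fin (d + 1) → ℝ) = (Pi.single 0 1 : Fin (d + 1) → ℝ))
    (hU : U = cU * cT)
    (v : Fin (d + 1) → ℝ)
    (hv : v = -(h / cT (Fin.last d) (Fin.last d)) • cUᵀ.mulVec u)
    (Xe : Matrix (Fin (d + 1)) (Fin (d + 1)) ℂ) (Λ : Fin (d + 1) → ℂ)
    (hXe : IsUnit Xe.det)
    (hdiag : (cUᵀ * A * cU).map Complex.ofReal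
        + vecMulVec (fun i => (v i : ℂ)) (Pi.single (Fin.last d) 1 : Fin (d + 1) → ℂ)
      = Xe * diagonal Λ * Xe⁻¹)
    (p : Polynomial ℂ) :
    eunorm b • ((U.map Complex.ofReal).mulVec
        ((Polynomial.aeval (H.map Complex.ofReal) p).mulVec
          (Pi.single 0 1 : Fin (d + 1) → ℂ)))
      - eunorm b • ((cU.map Complex.ofReal).mulVec
        ((Polynomial.aeval ((cUᵀ * A * cU).map Complex.ofReal) p).mulVec
          (Pi.single 0 1 : Fin (d + 1) → ℂ)))
    = eunorm b • ((cU.map Complex.ofReal).mulVec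
        ((∑ i, (Xe (Fin.last d) i * Xe⁻¹ i 0) •
            Polynomial.aeval ((cUᵀ * A * cU).map Complex.ofReal) (divDiffPoly p (Λ i))).mulVec
          (fun i => (v i : ℂ)))) := by
  -- notation
  set eR : Fin (d + 1) → ℝ := Pi.single (Fin.last d) 1 with heR
  set eC : Fin (d + 1) → ℂ := Pi.single (Fin.last d) 1 with heC
  set e1C : Fin (d + 1) → ℂ := Pi.single 0 1 with he1C
  set Hr : Matrix (Fin (d + 1)) (Fin (d + 1)) ℝ := cUᵀ * A * cU with hHr
  set Hcm : Matrix (Fin (d + 1)) (Fin (d + 1)) ℂ := Hr.map Complex.ofReal with hHcm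
  set vc : Fin (d + 1) → ℂ := fun i => (v i : ℂ) with hvc
  set Mc : Matrix (Fin (d + 1)) (Fin (d + 1)) ℂ := Hcm + vecMulVec vc eC with hMc
  set Tc : Matrix (Fin (d + 1)) (Fin (d + 1)) ℂ := cT.map Complex.ofReal with hTc
  set Hc : Matrix (Fin (d + 1)) (Fin (d + 1)) ℂ := H.map Complex.ofReal with hHc
  set τ : ℝ := cT (Fin.last d) (Fin.last d) with hτdef
  -- τ ≠ 0
  have hτ : τ ≠ 0 := by
    intro h0
    apply hcTdet
    rw [Matrix.det_of_upperTriangular (fun i j hij => hcTupper i j hij)]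
    exact Finset.prod_eq_zero (Finset.mem_univ (Fin.last d)) h0
  -- real key relation
  have hstep : Hr * cT = cT * H + h • vecMulVec (cUᵀ *ᵥ u) eR := by
    have h1 := congrArg (fun M => cUᵀ * M) hrel
    simp only [Matrix.mul_add] at h1
    have hAU : cUᵀ * (A * U) = Hr * cT := by
      rw [hU, hHr]; simp [Matrix.mul_assoc]
    have hUH : cUᵀ * (U * H) = cT * H := by
      rw [hU, show cUᵀ * (cU * cT * H) = (cUᵀ * cU) * (cT * H) by simp [Matrix.mul_assoc],
        hcU, Matrix.one_mul]
    have hOuter : cUᵀ * (h • vecMulVec u eR) = h • vecMulVec (cUᵀ *ᵥ u) eR := by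
      ext i j
      simp only [Matrix.mul_apply, Matrix.smul_apply, Matrix.vecMulVec_apply, Matrix.mulVec,
        dotProduct, smul_eq_mul, Finset.sum_mul, Finset.mul_sum]
      exact Finset.sum_congr rfl (fun k _ => by ring)
    rw [hAU, hUH, hOuter] at h1
    exact h1
  have hVT : vecMulVec v eR * cT = τ • vecMulVec v eR := by
    ext i j
    simp only [Matrix.mul_apply, Matrix.vecMulVec_apply, Matrix.smul_apply, smul_eq_mul]
    rw [Fintype.sum_eq_single (Fin.last d) (fun k hk => by simp [heR, Pi.single_eq_of_ne hk])]
    by_cases hj : j = Fin.last d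
    · subst hj; simp [heR]; ring
    · simp [heR, Pi.single_eq_of_ne hj,
        hcTupper (Fin.last d) j (lt_of_le_of_ne (Fin.le_last j) hj)]
  have hvv : ∀ i, τ * v i = -(h * (cUᵀ *ᵥ u) i) := by
    intro i
    rw [hv]
    simp only [Pi.smul_apply, smul_eq_mul]
    field_simp
  have hcancel : h • vecMulVec (cUᵀ *ᵥ u) eR + τ • vecMulVec v eR = 0 := by
    ext i j
    simp only [Matrix.add_apply, Matrix.smul_apply, Matrix.vecMulVec_apply, smul_eq_mul,
      Matrix.zero_apply]
    linear_combination (eR j) * hvv i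
  have hkeyR : (Hr + vecMulVec v eR) * cT = cT * H := by
    rw [Matrix.add_mul, hstep, hVT, add_assoc, hcancel, add_zero]
  -- complexify
  have hVVmap : (vecMulVec v eR).map Complex.ofReal = vecMulVec vc eC := by
    ext i j
    simp [Matrix.map_apply, Matrix.vecMulVec_apply, heR, heC, hvc, Pi.single_apply]
    split_ifs <;> simp
  have hkeyC : Mc * Tc = Tc * Hc := by
    have h1 := congrArg (fun M => M.map Complex.ofReal) hkeyR
    simp only [map_ofReal_mul, map_ofReal_add, hVVmap] at h1
    rw [hMc, hTc, hHc]
    exact h1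
  -- semiconjugation for all polynomials
  have hsemi : ∀ q : Polynomial ℂ, Tc * Polynomial.aeval Hc q = Polynomial.aeval Mc q * Tc :=
    fun q => semiconj_aeval Tc Hc Mc hkeyC.symm q
  -- Tc fixes e1
  have hTce1 : Tc *ᵥ e1C = e1C := by
    funext i
    have h0 : cT i 0 = (Pi.single 0 1 : Fin (d + 1) → ℝ) i := by
      simpa [Matrix.mulVec_single] using congrFun hcTe1 i
    have h1 : (Tc *ᵥ e1C) i = (cT i 0 : ℂ) := by
      simp [he1C, Matrix.mulVec_single, hTc, Matrix.map_apply]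
    rw [h1, h0]
    by_cases hi : i = 0 <;> simp [he1C, Pi.single_apply, hi]
  -- first term transformation
  have hterm1 : (U.map Complex.ofReal) *ᵥ ((Polynomial.aeval Hc p) *ᵥ e1C)
      = (cU.map Complex.ofReal) *ᵥ ((Polynomial.aeval Mc p) *ᵥ e1C) := by
    rw [Matrix.mulVec_mulVec, Matrix.mulVec_mulVec, hU, map_ofReal_mul, ← hTc,
      Matrix.mul_assoc, hsemi p, ← Matrix.mul_assoc, ← Matrix.mulVec_mulVec, hTce1,
      ← Matrix.mulVec_mulVec, Matrix.mulVec_mulVec]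
  -- diagonalization consequences
  have hMXe : Mc * Xe = Xe * diagonal Λ := by
    rw [hdiag, Matrix.mul_assoc (Xe * diagonal Λ), Matrix.nonsing_inv_mul Xe hXe,
      Matrix.mul_one]
  have hpw : ∀ (q : Polynomial ℂ) (i : Fin (d + 1)),
      (Polynomial.aeval Mc q) *ᵥ (fun k => Xe k i) = q.eval (Λ i) • (fun k => Xe k i) := by
    intro q i
    have h1 := semiconj_aeval Xe (diagonal Λ) Mc hMXe.symm q
    rw [aeval_diagonal'] at h1
    funext k
    have h2 : (Polynomial.aeval Mc q * Xe) k i = (Xe * diagonal fun j => q.eval (Λ j)) k i := by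
      rw [← h1]
    rw [Matrix.mul_apply, Matrix.mul_diagonal] at h2
    simp only [Matrix.mulVec, dotProduct, Pi.smul_apply, smul_eq_mul]
    rw [h2, mul_comm]
  have he1 : e1C = ∑ i, (Xe⁻¹ i 0) • (fun k => Xe k i) := by
    funext k
    have h1 : (Xe * Xe⁻¹) k 0 = (1 : Matrix (Fin (d + 1)) (Fin (d + 1)) ℂ) k 0 := by
      rw [Matrix.mul_nonsing_inv Xe hXe]
    rw [Matrix.mul_apply, Matrix.one_apply] at h1
    simp only [he1C, Finset.sum_apply, Pi.smul_apply, smul_eq_mul, Pi.single_apply]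
    rw [← h1]
    exact Finset.sum_congr rfl (fun i _ => mul_comm _ _)
  -- divided difference factorization
  have hdiv : ∀ lam : ℂ, (Polynomial.X - Polynomial.C lam) * divDiffPoly p lam
      = p - Polynomial.C (p.eval lam) := by
    intro lam
    exact EuclideanDomain.mul_div_cancel' (Polynomial.X_sub_C_ne_zero lam)
      (Polynomial.dvd_iff_isRoot.mpr (by simp [Polynomial.IsRoot]))
  have hfac : ∀ lam : ℂ,
      Polynomial.aeval Hcm p - algebraMap ℂ _ (p.eval lam)
      = Polynomial.aeval Hcm (divDiffPoly p lam) * (Hcm - algebraMap ℂ _ lam) := by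
    intro lam
    have h1 := congrArg (Polynomial.aeval Hcm) ((mul_comm _ _).trans (hdiv lam))
    simp only [_root_.map_mul, map_sub, Polynomial.aeval_X, Polynomial.aeval_C] at h1
    exact h1.symm
  -- action of (Hcm - λ) on eigenvector columns
  have hVVw : ∀ i, (vecMulVec vc eC) *ᵥ (fun k => Xe k i) = Xe (Fin.last d) i • vc := by
    intro i
    funext k
    simp only [Matrix.mulVec, dotProduct, Matrix.vecMulVec_apply, Pi.smul_apply, smul_eq_mul]
    rw [Fintype.sum_eq_single (Fin.last d) (fun k' hk' => by simp [heC, Pi.single_eq_of_ne hk'])]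
    simp [heC]
    ring
  have hHcw : ∀ i, (Hcm - algebraMap ℂ _ (Λ i)) *ᵥ (fun k => Xe k i)
      = -(Xe (Fin.last d) i • vc) := by
    intro i
    have hMw := hpw Polynomial.X i
    simp only [Polynomial.aeval_X, Polynomial.eval_X] at hMw
    have hHm : Hcm = Mc - vecMulVec vc eC := by rw [hMc]; abel
    rw [Algebra.algebraMap_eq_smul_one, Matrix.sub_mulVec, hHm, Matrix.sub_mulVec, hMw,
      Matrix.smul_mulVec, Matrix.one_mulVec, hVVw i]
    abel
  -- per-column difference identity
  have hterm : ∀ i, (Polynomial.aeval Mc p - Polynomial.aeval Hcm p) *ᵥ (fun k => Xe k i)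
      = Xe (Fin.last d) i • ((Polynomial.aeval Hcm (divDiffPoly p (Λ i))) *ᵥ vc) := by
    intro i
    have h3 := congrArg (fun M => M *ᵥ (fun k => Xe k i)) (hfac (Λ i))
    rw [Matrix.sub_mulVec, ← Matrix.mulVec_mulVec, hHcw i, Matrix.mulVec_neg,
      Matrix.mulVec_smul, Algebra.algebraMap_eq_smul_one, Matrix.smul_mulVec,
      Matrix.one_mulVec] at h3
    -- h3 : aeval Hcm p *ᵥ col - eval • col = -(α • (D *ᵥ vc))
    rw [Matrix.sub_mulVec, hpw p i, ← neg_sub, h3, neg_neg]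
  -- linearity over the eigenbasis decomposition of e1
  have hlin : ∀ (N : Matrix (Fin (d + 1)) (Fin (d + 1)) ℂ),
      N *ᵥ (∑ i, (Xe⁻¹ i 0) • (fun k => Xe k i))
      = ∑ i, (Xe⁻¹ i 0) • (N *ᵥ (fun k => Xe k i)) := by
    intro N
    rw [← Matrix.mulVecLin_apply, map_sum]
    simp only [Matrix.mulVecLin_apply]
    exact Finset.sum_congr rfl (fun i _ => Matrix.mulVec_smul _ _ _)
  have claim : (Polynomial.aeval Mc p - Polynomial.aeval Hcm p) *ᵥ e1C
      = ∑ i, (Xe (Fin.last d) i * Xe⁻¹ i 0) •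
          ((Polynomial.aeval Hcm (divDiffPoly p (Λ i))) *ᵥ vc) := by
    rw [he1, hlin]
    refine Finset.sum_congr rfl (fun i _ => ?_)
    rw [hterm i, smul_smul, mul_comm]
  -- final assembly
  rw [hterm1, ← smul_sub, ← Matrix.mulVec_sub, ← Matrix.sub_mulVec, claim, sum_mulVec']
  simp only [Matrix.smul_mulVec]
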